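/- Let Z be a real-valued random variable with law P0 such that the moment generating function E_{P0}[e^{λZ}] is finite for every λ ∈ ℝ. Then the stability value of the mean satisfies s(μ,P0) = sup{ exp(−D_KL(P‖P0)) : P a probability measure on ℝ with E_P[Z] = 0 } = inf_{λ∈ℝ} E_{P0}[e^{λZ}]. -/

import Mathlib

open MeasureTheory ProbabilityTheory Real
open scoped ENNReal NNReal Classical

open Filter

lemma lintegral_exp_neg_llr_le {α : Type*} [MeasurableSpace α] (μ ν : Measure α)
    [IsProbabilityMeasure μ] [IsProbabilityMeasure ν] (hμν : μ ≪ ν) :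
    ∫⁻ x, ENNReal.ofReal (Real.exp (-llr μ ν x)) ∂μ ≤ 1 := by
  have hrw : ∫⁻ x, ENNReal.ofReal (Real.exp (-llr μ ν x)) ∂μ
      = ∫⁻ x, ((∂μ/∂ν) * fun x => ENNReal.ofReal (Real.exp (-llr μ ν x))) x ∂ν := by
    rw [← lintegral_withDensity_eq_lintegral_mul ν (Measure.measurable_rnDeriv μ ν)
      (show Measurable (fun x => ENNReal.ofReal (Real.exp (-llr μ ν x))) from
        ((measurable_llr μ ν).neg.exp).ennreal_ofReal),
      Measure.withDensity_rnDeriv_eq μ ν hμν]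
  rw [hrw]
  calc ∫⁻ x, ((∂μ/∂ν) * fun x => ENNReal.ofReal (Real.exp (-llr μ ν x))) x ∂ν
      ≤ ∫⁻ _, 1 ∂ν := by
        refine lintegral_mono_ae ?_
        filter_upwards [Measure.rnDeriv_lt_top μ ν] with x hx
        simp only [Pi.mul_apply]
        rcases eq_or_ne ((∂μ/∂ν) x) 0 with h0 | h0
        · simp [h0]
        · have hpos : 0 < ((∂μ/∂ν) x).toReal := ENNReal.toReal_pos h0 hx.ne
          simp only [llr_def]
          rw [Real.exp_neg, Real.exp_log hpos, ENNReal.ofReal_inv_of_pos hpos,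
            ENNReal.ofReal_toReal hx.ne, mul_comm, ENNReal.inv_mul_cancel h0 hx.ne]
    _ = 1 := by simp
  
lemma integral_llr_nonneg' {α : Type*} [MeasurableSpace α] (μ ν : Measure α)
    [IsProbabilityMeasure μ] [IsProbabilityMeasure ν] (hμν : μ ≪ ν)
    (h : Integrable (llr μ ν) μ) : 0 ≤ ∫ x, llr μ ν x ∂μ := by
  have hm : AEStronglyMeasurable (fun x => Real.exp (-llr μ ν x)) μ :=
    ((measurable_llr μ ν).neg.exp).aestronglyMeasurable
  have hint : Integrable (fun x => Real.exp (-llr μ ν x)) μ := by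
    refine ⟨hm, ?_⟩
    rw [hasFiniteIntegral_iff_ofReal (Eventually.of_forall fun x => (Real.exp_pos _).le)]
    exact lt_of_le_of_lt (lintegral_exp_neg_llr_le μ ν hμν) ENNReal.one_lt_top
  have key : ∫ x, -llr μ ν x ∂μ ≤ ∫ x, (Real.exp (-llr μ ν x) - 1) ∂μ :=
    integral_mono h.neg (hint.sub (integrable_const 1))
      fun x => by nlinarith [Real.add_one_le_exp (-llr μ ν x)]
  have h2 : ∫ x, Real.exp (-llr μ ν x) ∂μ ≤ 1 := by
    rw [integral_eq_lintegral_of_nonneg_ae (Eventually.of_forall fun x => (Real.exp_pos _).le) hm]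
    calc (∫⁻ x, ENNReal.ofReal (Real.exp (-llr μ ν x)) ∂μ).toReal
        ≤ (1 : ℝ≥0∞).toReal :=
          ENNReal.toReal_mono ENNReal.one_ne_top (lintegral_exp_neg_llr_le μ ν hμν)
      _ = 1 := by simp
  rw [integral_neg] at key
  rw [integral_sub hint (integrable_const 1), integral_const] at key
  simp only [Measure.real, measure_univ, ENNReal.toReal_one, smul_eq_mul, one_mul] at key
  linarith

lemma donsker_varadhan {α : Type*} [MeasurableSpace α] (P P₀ : Measure α)
    [IsProbabilityMeasure P] [IsProbabilityMeasure P₀] (f : α → ℝ)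
    (hac : P ≪ P₀) (hllr : Integrable (llr P P₀) P) (hf : Integrable f P)
    (hef : Integrable (fun x => Real.exp (f x)) P₀) :
    ∫ x, f x ∂P - Real.log (∫ x, Real.exp (f x) ∂P₀) ≤ ∫ x, llr P P₀ x ∂P := by
  haveI : IsProbabilityMeasure (P₀.tilted f) := isProbabilityMeasure_tilted hef
  have hac2 : P ≪ P₀.tilted f := hac.trans (absolutelyContinuous_tilted hef)
  have heq := integral_llr_tilted_right hac hf hef hllr
  have hnn := integral_llr_nonneg' P (P₀.tilted f) hac2
    (integrable_llr_tilted_right hac hf hllr hef)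
  rw [heq] at hnn
  linarith

lemma abs_le_exp_add_exp_neg (z : ℝ) : |z| ≤ Real.exp z + Real.exp (-z) := by
  rcases le_total 0 z with h | h
  · rw [abs_of_nonneg h]; nlinarith [Real.add_one_le_exp z, Real.exp_pos (-z)]
  · rw [abs_of_nonpos h]; nlinarith [Real.add_one_le_exp (-z), Real.exp_pos z]

lemma exp_mul_le_of_between {a b c : ℝ} (z : ℝ) (hb : b ≤ a) (hc : a ≤ c) :
    Real.exp (a * z) ≤ Real.exp (b * z) + Real.exp (c * z) := by
  rcases le_total 0 z with h | h
  · calc Real.exp (a * z) ≤ Real.exp (c * z) :=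
        Real.exp_le_exp.2 (mul_le_mul_of_nonneg_right hc h)
    _ ≤ _ := le_add_of_nonneg_left (Real.exp_pos _).le
  · calc Real.exp (a * z) ≤ Real.exp (b * z) :=
        Real.exp_le_exp.2 (mul_le_mul_of_nonpos_right hb h)
    _ ≤ _ := le_add_of_nonneg_right (Real.exp_pos _).le

lemma hasDerivAt_mgf' (P₀ : Measure ℝ) [IsProbabilityMeasure P₀]
    (hmgf : ∀ l : ℝ, Integrable (fun z => Real.exp (l * z)) P₀) (t : ℝ) :
    Integrable (fun z => z * Real.exp (t * z)) P₀ ∧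
    HasDerivAt (fun l : ℝ => ∫ z, Real.exp (l * z) ∂P₀) (∫ z, z * Real.exp (t * z) ∂P₀) t := by
  set bound : ℝ → ℝ := fun z =>
    Real.exp ((t + 2) * z) + Real.exp (t * z) + (Real.exp (t * z) + Real.exp ((t - 2) * z))
    with hbd
  have hbint : Integrable bound P₀ := ((hmgf _).add (hmgf _)).add ((hmgf _).add (hmgf _))
  have hmeas : ∀ s : ℝ, AEStronglyMeasurable (fun z => Real.exp (s * z)) P₀ := fun s =>
    (Real.continuous_exp.comp (continuous_const.mul continuous_id)).aestronglyMeasurable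
  have hmeas' : AEStronglyMeasurable (fun z => z * Real.exp (t * z)) P₀ :=
    (continuous_id.mul (Real.continuous_exp.comp
      (continuous_const.mul continuous_id))).aestronglyMeasurable
  have hb : ∀ᵐ z ∂P₀, ∀ s ∈ Metric.ball t 1, ‖z * Real.exp (s * z)‖ ≤ bound z := by
    refine Eventually.of_forall fun z => fun s hs => ?_
    have hs' : |s - t| < 1 := by simpa [Real.dist_eq] using hs
    obtain ⟨hs1, hs2⟩ := abs_lt.1 hs'
    rw [Real.norm_eq_abs, abs_mul, Real.abs_exp]
    calc |z| * Real.exp (s * z)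
        ≤ (Real.exp z + Real.exp (-z)) * Real.exp (s * z) :=
          mul_le_mul_of_nonneg_right (abs_le_exp_add_exp_neg z) (Real.exp_pos _).le
      _ = Real.exp ((s + 1) * z) + Real.exp ((s - 1) * z) := by
          rw [add_mul, ← Real.exp_add, ← Real.exp_add]; ring_nf
      _ ≤ (Real.exp (t * z) + Real.exp ((t + 2) * z))
          + (Real.exp ((t - 2) * z) + Real.exp (t * z)) := by
          gcongr ?_ + ?_
          · exact exp_mul_le_of_between z (by linarith) (by linarith)
          · exact exp_mul_le_of_between z (by linarith) (by linarith)
      _ ≤ bound z := le_of_eq (by rw [hbd]; ring)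
  have hd : ∀ᵐ z ∂P₀, ∀ s ∈ Metric.ball t 1,
      HasDerivAt (fun s : ℝ => Real.exp (s * z)) (z * Real.exp (s * z)) s := by
    refine Eventually.of_forall fun z s _ => ?_
    simpa [mul_comm] using ((hasDerivAt_mul_const z (x := s)).exp)
  have := hasDerivAt_integral_of_dominated_loc_of_deriv_le (μ := P₀)
    (F := fun s z => Real.exp (s * z)) (F' := fun s z => z * Real.exp (s * z)) (x₀ := t)
    (bound := bound) (Metric.ball_mem_nhds t one_pos) (Eventually.of_forall fun s => hmeas s) (hmgf t) hmeas' hb hbint hd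
  exact this

/-- Kullback–Leibler divergence `D_KL(P‖P₀)`, valued in `ℝ≥0∞`: it is the integral
`∫ log (dP/dP₀) dP` when `P ≪ P₀` (and the integrand is integrable), and `+∞` otherwise. -/

noncomputable def KLdiv {α : Type*} [MeasurableSpace α] (P P₀ : Measure α) : ℝ≥0∞ :=
  if P ≪ P₀ ∧ Integrable (llr P P₀) P then ENNReal.ofReal (∫ x, llr P P₀ x ∂P) else ⊤

/-- `exp(−D_KL(P‖P₀))`, with the convention `exp(−∞) = 0`. -/
noncomputable def expNegKL {α : Type*} [MeasurableSpace α] (P P₀ : Measure α) : ℝ :=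
  if KLdiv P P₀ = ⊤ then 0 else Real.exp (-(KLdiv P P₀).toReal)

lemma expNegKL_nonneg {α : Type*} [MeasurableSpace α] (P P₀ : Measure α) :
    0 ≤ expNegKL P P₀ := by
  rw [expNegKL]; split_ifs
  · exact le_refl 0
  · exact (Real.exp_pos _).le

lemma expNegKL_le_one {α : Type*} [MeasurableSpace α] (P P₀ : Measure α) :
    expNegKL P P₀ ≤ 1 := by
  rw [expNegKL]; split_ifs
  · exact zero_le_one
  · exact Real.exp_le_one_iff.2 (neg_nonpos.2 ENNReal.toReal_nonneg)

lemma expNegKL_le (P₀ P : Measure ℝ) [IsProbabilityMeasure P₀] [IsProbabilityMeasure P]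
    (hmgf : ∀ l : ℝ, Integrable (fun z => Real.exp (l * z)) P₀)
    (hz : Integrable (fun z => z) P) (hmean : ∫ z, z ∂P = 0) (l : ℝ) :
    expNegKL P P₀ ≤ ∫ z, Real.exp (l * z) ∂P₀ := by
  have hMpos : 0 < ∫ z, Real.exp (l * z) ∂P₀ := integral_exp_pos (hmgf l)
  by_cases h : P ≪ P₀ ∧ Integrable (llr P P₀) P
  · obtain ⟨hac, hllr⟩ := h
    have hK : KLdiv P P₀ = ENNReal.ofReal (∫ x, llr P P₀ x ∂P) := if_pos ⟨hac, hllr⟩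
    have hKnn : 0 ≤ ∫ x, llr P P₀ x ∂P := integral_llr_nonneg' P P₀ hac hllr
    have hfint : Integrable (fun z => l * z) P := hz.const_mul l
    have hdv := donsker_varadhan P P₀ (fun z => l * z) hac hllr hfint (hmgf l)
    have hmean' : ∫ z, l * z ∂P = 0 := by rw [integral_const_mul, hmean, mul_zero]
    rw [hmean'] at hdv
    rw [expNegKL, hK, if_neg ENNReal.ofReal_ne_top, ENNReal.toReal_ofReal hKnn]
    calc Real.exp (-∫ x, llr P P₀ x ∂P)
        ≤ Real.exp (Real.log (∫ z, Real.exp (l * z) ∂P₀)) :=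
          Real.exp_le_exp.2 (by linarith)
      _ = _ := Real.exp_log hMpos
  · rw [expNegKL, KLdiv, if_neg h]
    simp [hMpos.le]

lemma exists_tail_set (P₀ : Measure ℝ) (hA : P₀ {z : ℝ | 0 < z} ≠ 0) :
    ∃ ε : ℝ, 0 < ε ∧ P₀ {z : ℝ | ε ≤ z} ≠ 0 := by
  have hsub : {z : ℝ | 0 < z} ⊆ ⋃ n : ℕ, {z : ℝ | 1 / (n + 1) ≤ z} := by
    intro z hz
    simp only [Set.mem_setOf_eq] at hz
    obtain ⟨n, hn⟩ := exists_nat_gt (1 / z)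
    refine Set.mem_iUnion.2 ⟨n, ?_⟩
    simp only [Set.mem_setOf_eq]
    rw [div_le_iff₀ (by positivity)]
    rw [div_lt_iff₀ hz] at hn
    nlinarith
  obtain ⟨n, hn⟩ : ∃ n : ℕ, P₀ {z : ℝ | 1 / (n + 1) ≤ z} ≠ 0 := by
    by_contra hcon
    push_neg at hcon
    exact hA (measure_mono_null hsub (measure_iUnion_null_iff.2 hcon))
  exact ⟨1 / (n + 1), by positivity, hn⟩

lemma lower_bd_mgf (P₀ : Measure ℝ) [IsProbabilityMeasure P₀]
    (hmgf : ∀ l : ℝ, Integrable (fun z => Real.exp (l * z)) P₀)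
    {ε : ℝ} (l : ℝ) (hl : 0 ≤ l * ε) (hs : ∀ z ∈ {z : ℝ | ε ≤ z}, l * ε ≤ l * z) :
    (P₀ {z : ℝ | ε ≤ z}).toReal * Real.exp (l * ε) ≤ ∫ z, Real.exp (l * z) ∂P₀ := by
  have hms : MeasurableSet {z : ℝ | ε ≤ z} := measurableSet_le measurable_const measurable_id
  calc (P₀ {z : ℝ | ε ≤ z}).toReal * Real.exp (l * ε)
      = ∫ _ in {z : ℝ | ε ≤ z}, Real.exp (l * ε) ∂P₀ := by rw [setIntegral_const]; simp; rfl
    _ ≤ ∫ z in {z : ℝ | ε ≤ z}, Real.exp (l * z) ∂P₀ :=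
        setIntegral_mono_on (integrable_const _).integrableOn (hmgf l).integrableOn hms
          (fun z hz => Real.exp_le_exp.2 (hs z hz))
    _ ≤ _ := setIntegral_le_integral (hmgf l) (Eventually.of_forall fun z => (Real.exp_pos _).le)

lemma exists_min (P₀ : Measure ℝ) [IsProbabilityMeasure P₀]
    (hmgf : ∀ l : ℝ, Integrable (fun z => Real.exp (l * z)) P₀)
    (hA : P₀ {z : ℝ | 0 < z} ≠ 0) (hB : P₀ {z : ℝ | z < 0} ≠ 0) :
    ∃ t : ℝ, ∀ s : ℝ, ∫ z, Real.exp (t * z) ∂P₀ ≤ ∫ z, Real.exp (s * z) ∂P₀ := by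
  set M : ℝ → ℝ := fun l => ∫ z, Real.exp (l * z) ∂P₀ with hM
  have hcont : Continuous M := by
    have : Differentiable ℝ M := fun t => ((hasDerivAt_mgf' P₀ hmgf t).2).differentiableAt
    exact this.continuous
  obtain ⟨ε, hε, hεne⟩ := exists_tail_set P₀ hA
  have hB' : P₀ {z : ℝ | 0 < -z} ≠ 0 := by
    convert hB using 2; ext z; simp [neg_pos]
  obtain ⟨δ, hδ, hδne'⟩ : ∃ δ : ℝ, 0 < δ ∧ P₀ {z : ℝ | z ≤ -δ} ≠ 0 := by
    obtain ⟨δ, hδ, hne⟩ := exists_tail_set (P₀.map Neg.neg) (by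
      rwa [Measure.map_apply measurable_neg ((measurableSet_lt measurable_const measurable_id) : MeasurableSet {z : ℝ | 0 < z}), Set.preimage_setOf_eq])
    refine ⟨δ, hδ, ?_⟩
    rw [Measure.map_apply measurable_neg ((measurableSet_le measurable_const measurable_id) : MeasurableSet {z : ℝ | δ ≤ z}), Set.preimage_setOf_eq] at hne
    convert hne using 2
    ext z; simp [le_neg]
    
  have hcε : 0 < (P₀ {z : ℝ | ε ≤ z}).toReal :=
    ENNReal.toReal_pos hεne (measure_ne_top _ _)
  have hcδ : 0 < (P₀ {z : ℝ | z ≤ -δ}).toReal :=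
    ENNReal.toReal_pos hδne' (measure_ne_top _ _)
  have hTop : Tendsto M atTop atTop := by
    refine tendsto_atTop_mono' atTop ?_
      ((Real.tendsto_exp_atTop.comp (tendsto_id.atTop_mul_const hε)).const_mul_atTop hcε)
    filter_upwards [eventually_ge_atTop (0:ℝ)] with l hl
    exact lower_bd_mgf P₀ hmgf l (by positivity)
      (fun z hz => mul_le_mul_of_nonneg_left hz hl)
  have hBot : Tendsto M atBot atTop := by
    have hlow : ∀ l : ℝ, l ≤ 0 →
        (P₀ {z : ℝ | z ≤ -δ}).toReal * Real.exp (l * -δ) ≤ M l := by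
      intro l hl
      have hms : MeasurableSet {z : ℝ | z ≤ -δ} := measurableSet_le measurable_id measurable_const
      calc (P₀ {z : ℝ | z ≤ -δ}).toReal * Real.exp (l * -δ)
          = ∫ _ in {z : ℝ | z ≤ -δ}, Real.exp (l * -δ) ∂P₀ := by rw [setIntegral_const]; simp; rfl
        _ ≤ ∫ z in {z : ℝ | z ≤ -δ}, Real.exp (l * z) ∂P₀ :=
            setIntegral_mono_on (integrable_const _).integrableOn (hmgf l).integrableOn hms
              (fun z hz => Real.exp_le_exp.2 (mul_le_mul_of_nonpos_left hz hl))
        _ ≤ _ := setIntegral_le_integral (hmgf l)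
            (Eventually.of_forall fun z => (Real.exp_pos _).le)
    have hinner : Tendsto (fun l : ℝ => l * -δ) atBot atTop := by
      simpa using (tendsto_id (α := ℝ)).atBot_mul_const_of_neg (neg_neg_iff_pos.2 hδ)
    refine tendsto_atTop_mono' atBot ?_
      ((Real.tendsto_exp_atTop.comp hinner).const_mul_atTop hcδ)
    filter_upwards [eventually_le_atBot (0:ℝ)] with l hl using hlow l hl
  obtain ⟨t, ht⟩ := hcont.exists_forall_le (by
    rw [cocompact_eq_atBot_atTop]
    exact tendsto_sup.2 ⟨hBot, hTop⟩)
  exact ⟨t, ht⟩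

lemma case_min (P₀ : Measure ℝ) [IsProbabilityMeasure P₀]
    (hmgf : ∀ l : ℝ, Integrable (fun z => Real.exp (l * z)) P₀) (t : ℝ)
    (hmin : ∀ s : ℝ, ∫ z, Real.exp (t * z) ∂P₀ ≤ ∫ z, Real.exp (s * z) ∂P₀) :
    ∃ P : Measure ℝ, IsProbabilityMeasure P ∧ Integrable (fun z => z) P ∧ (∫ z, z ∂P = 0) ∧
      expNegKL P P₀ = ∫ z, Real.exp (t * z) ∂P₀ := by
  obtain ⟨hint, hderiv⟩ := hasDerivAt_mgf' P₀ hmgf t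
  have hcrit : ∫ z, z * Real.exp (t * z) ∂P₀ = 0 := by
    have hloc : IsLocalMin (fun l : ℝ => ∫ z, Real.exp (l * z) ∂P₀) t :=
      Filter.Eventually.of_forall hmin
    exact hloc.hasDerivAt_eq_zero hderiv
  set f : ℝ → ℝ := fun z => t * z with hf
  have hef : Integrable (fun x => Real.exp (f x)) P₀ := hmgf t
  set Mt : ℝ := ∫ z, Real.exp (t * z) ∂P₀ with hMt
  have hMtpos : 0 < Mt := integral_exp_pos hef
  set P : Measure ℝ := P₀.tilted f with hP
  haveI hprob : IsProbabilityMeasure P := isProbabilityMeasure_tilted hef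
  have hefint : ∫ x, Real.exp (f x) ∂P₀ = Mt := rfl
  -- integrability of z under P
  have hdmeas : Measurable fun z : ℝ => ENNReal.ofReal (Real.exp (f z) / Mt) :=
    ((Real.measurable_exp.comp (measurable_const.mul measurable_id)).div_const Mt).ennreal_ofReal
  have hzint : Integrable (fun z => z) P := by
    rw [hP, Measure.tilted, hefint]
    rw [integrable_withDensity_iff hdmeas (Eventually.of_forall fun x => ENNReal.ofReal_lt_top)]
    have he : (fun z : ℝ => z * (ENNReal.ofReal (Real.exp (f z) / Mt)).toReal)
        = fun z => (z * Real.exp (t * z)) / Mt := by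
      funext z
      rw [ENNReal.toReal_ofReal (by positivity)]
      rw [hf]; ring
    rw [he]
    exact hint.div_const Mt
  have hmean : ∫ z, z ∂P = 0 := by
    rw [hP, integral_tilted f (fun z => z)]
    have he : (fun x : ℝ => (Real.exp (f x) / ∫ x, Real.exp (f x) ∂P₀) • x)
        = fun x => (x * Real.exp (t * x)) / Mt := by
      funext x
      rw [hefint, smul_eq_mul, hf]; ring
    rw [he, integral_div, hcrit, zero_div]
  -- llr
  have hllr_eq : llr P P₀ =ᵐ[P] fun z => f z - Real.log Mt := by
    have h0 := log_rnDeriv_tilted_left_self (μ := P₀) (f := f) hef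
    rw [← hefint]
    have h1 : llr P P₀ =ᵐ[P₀] fun z => f z - Real.log (∫ x, Real.exp (f x) ∂P₀) := by
      rw [llr_def]; exact h0
    exact h1.filter_mono (tilted_absolutelyContinuous P₀ f).ae_le
  have hllr_int : Integrable (llr P P₀) P := by
    refine Integrable.congr ?_ hllr_eq.symm
    exact ((hzint.const_mul t).sub (integrable_const _))
  have hKLval : ∫ x, llr P P₀ x ∂P = -Real.log Mt := by
    rw [integral_congr_ae hllr_eq]
    rw [integral_sub (hzint.const_mul t) (integrable_const _)]
    have : ∫ z, f z ∂P = 0 := by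
      simp only [hf]
      rw [integral_const_mul, hmean, mul_zero]
    rw [this, integral_const]
    simp
  have hlognp : Real.log Mt ≤ 0 := by
    refine Real.log_nonpos hMtpos.le ?_
    have := hmin 0
    simpa using this
  have hK : KLdiv P P₀ = ENNReal.ofReal (-Real.log Mt) := by
    rw [KLdiv, if_pos ⟨tilted_absolutelyContinuous P₀ f, hllr_int⟩, hKLval]
  refine ⟨P, hprob, hzint, hmean, ?_⟩
  rw [expNegKL, hK, if_neg ENNReal.ofReal_ne_top,
    ENNReal.toReal_ofReal (by linarith), neg_neg, Real.exp_log hMtpos]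

lemma cond_measure (P₀ : Measure ℝ) [IsProbabilityMeasure P₀] (hp : P₀ {(0:ℝ)} ≠ 0) :
    ∃ P : Measure ℝ, IsProbabilityMeasure P ∧ Integrable (fun z => z) P ∧ (∫ z, z ∂P = 0) ∧
      expNegKL P P₀ = (P₀ {(0:ℝ)}).toReal := by
  set s : Set ℝ := {(0:ℝ)} with hs
  have hms : MeasurableSet s := measurableSet_singleton 0
  have hfin : P₀ s ≠ ⊤ := measure_ne_top _ _
  set d : ℝ → ℝ≥0∞ := s.indicator (fun _ => (P₀ s)⁻¹) with hd
  have hdmeas : Measurable d := measurable_const.indicator hms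
  set P : Measure ℝ := P₀.withDensity d with hP
  have hPac : P ≪ P₀ := withDensity_absolutelyContinuous P₀ d
  haveI hprob : IsProbabilityMeasure P := by
    constructor
    rw [hP, withDensity_apply d MeasurableSet.univ, Measure.restrict_univ, hd,
      lintegral_indicator hms, setLIntegral_const]
    exact ENNReal.inv_mul_cancel hp hfin
  have hPcompl : P sᶜ = 0 := by
    rw [hP, withDensity_apply d hms.compl]
    have : ∀ᵐ z ∂(P₀.restrict sᶜ), d z = 0 := by
      rw [ae_restrict_iff' hms.compl]
      exact Eventually.of_forall fun z hz => Set.indicator_of_notMem hz _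
    rw [lintegral_congr_ae this, lintegral_zero]
  have hae0 : ∀ᵐ z ∂P, z = 0 := by
    rw [ae_iff]
    have : {z : ℝ | ¬ z = 0} = sᶜ := by ext z; simp [hs]
    rw [this, hPcompl]
  have hzint : Integrable (fun z => z) P :=
    Integrable.congr (integrable_const (0:ℝ)) (hae0.mono fun z h => h.symm)
  have hmean : ∫ z, z ∂P = 0 := by
    rw [integral_congr_ae (hae0.mono fun z h => h), integral_const]; simp
  have hrn : (∂P/∂P₀) =ᵐ[P] d :=
    (Measure.rnDeriv_withDensity P₀ hdmeas).filter_mono hPac.ae_le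
  have hllr_eq : llr P P₀ =ᵐ[P] fun _ => -Real.log (P₀ s).toReal := by
    filter_upwards [hrn, hae0] with z h1 h2
    rw [llr_def]
    simp only
    rw [h1, hd, h2, Set.indicator_of_mem (Set.mem_singleton 0), ENNReal.toReal_inv,
      Real.log_inv]
  have hllr_int : Integrable (llr P P₀) P :=
    Integrable.congr (integrable_const _) hllr_eq.symm
  have hKLval : ∫ x, llr P P₀ x ∂P = -Real.log (P₀ s).toReal := by
    rw [integral_congr_ae hllr_eq, integral_const]; simp
  have hppos : 0 < (P₀ s).toReal := ENNReal.toReal_pos hp hfin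
  have hple : (P₀ s).toReal ≤ 1 := by
    have := prob_le_one (μ := P₀) (s := s)
    calc (P₀ s).toReal ≤ (1 : ℝ≥0∞).toReal :=
      ENNReal.toReal_mono ENNReal.one_ne_top this
    _ = 1 := by simp
  have hlognp : Real.log (P₀ s).toReal ≤ 0 := Real.log_nonpos hppos.le hple
  have hK : KLdiv P P₀ = ENNReal.ofReal (-Real.log (P₀ s).toReal) := by
    rw [KLdiv, if_pos ⟨hPac, hllr_int⟩, hKLval]
  refine ⟨P, hprob, hzint, hmean, ?_⟩
  rw [expNegKL, hK, if_neg ENNReal.ofReal_ne_top,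
    ENNReal.toReal_ofReal (by linarith), neg_neg, Real.exp_log hppos]

lemma tendsto_mgf_atom (P₀ : Measure ℝ) [IsProbabilityMeasure P₀]
    (c : ℝ) (hc : c ≠ 0) (hsgn : ∀ᵐ z ∂P₀, 0 ≤ c * z) :
    Tendsto (fun n : ℕ => ∫ z, Real.exp ((-(n:ℝ) * c) * z) ∂P₀) atTop
      (nhds ((P₀ {(0:ℝ)}).toReal)) := by
  have hlim : ∫ z, Set.indicator {(0:ℝ)} (fun _ => (1:ℝ)) z ∂P₀ = (P₀ {(0:ℝ)}).toReal := by
    rw [integral_indicator_const (1:ℝ) (measurableSet_singleton 0)]; simp; rfl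
  rw [← hlim]
  refine tendsto_integral_of_dominated_convergence (fun _ => (1:ℝ)) ?_ (integrable_const 1) ?_ ?_
  · exact fun n => (Real.continuous_exp.comp
      (continuous_const.mul continuous_id)).aestronglyMeasurable
  · intro n
    filter_upwards [hsgn] with z hz
    rw [Real.norm_eq_abs, Real.abs_exp]
    refine Real.exp_le_one_iff.2 ?_
    have : (-(n:ℝ) * c) * z = -((n:ℝ) * (c * z)) := by ring
    rw [this]
    simp only [neg_nonpos]
    positivity
  · filter_upwards [hsgn] with z hz
    rcases eq_or_lt_of_le hz with h0 | hpos
    · have hz0 : z = 0 := by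
        rcases mul_eq_zero.1 h0.symm with h | h
        · exact absurd h hc
        · exact h
      rw [hz0]
      have : ∀ n : ℕ, Real.exp ((-(n:ℝ) * c) * (0:ℝ)) = 1 := by
        intro n; simp
      simp only [this]
      have : Set.indicator {(0:ℝ)} (fun _ => (1:ℝ)) 0 = 1 :=
        Set.indicator_of_mem (Set.mem_singleton 0) _
      rw [this]
      exact tendsto_const_nhds
    · have hz0 : z ≠ 0 := by
        intro h; rw [h, mul_zero] at hpos; exact lt_irrefl _ hpos
      have hind : Set.indicator {(0:ℝ)} (fun _ => (1:ℝ)) z = 0 :=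
        Set.indicator_of_notMem (by simpa using hz0) _
      rw [hind]
      have he : ∀ n : ℕ, Real.exp ((-(n:ℝ) * c) * z) = Real.exp (-((n:ℝ) * (c * z))) := by
        intro n; congr 1; ring
      simp only [he]
      refine Real.tendsto_exp_atBot.comp ?_
      refine Tendsto.comp tendsto_neg_atTop_atBot ?_
      exact tendsto_natCast_atTop_atTop.atTop_mul_const hpos
  
lemma atom_le_mgf (P₀ : Measure ℝ) [IsProbabilityMeasure P₀]
    (hmgf : ∀ l : ℝ, Integrable (fun z => Real.exp (l * z)) P₀) (l : ℝ) :
    (P₀ {(0:ℝ)}).toReal ≤ ∫ z, Real.exp (l * z) ∂P₀ := by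
  have hlim : ∫ z, Set.indicator {(0:ℝ)} (fun _ => (1:ℝ)) z ∂P₀ = (P₀ {(0:ℝ)}).toReal := by
    rw [integral_indicator_const (1:ℝ) (measurableSet_singleton 0)]; simp; rfl
  rw [← hlim]
  refine integral_mono ((integrable_const (1:ℝ)).indicator (measurableSet_singleton 0)) (hmgf l) ?_
  intro z
  rcases eq_or_ne z 0 with h | h
  · rw [h]
    rw [Set.indicator_of_mem (Set.mem_singleton 0)]
    simp
  · rw [Set.indicator_of_notMem (by simpa using h)]
    exact (Real.exp_pos _).le

/-- Donsker–Varadhan characterization of the s-value of the mean: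
for `Z ~ P₀` with everywhere-finite moment generating function,
`s(μ, P₀) = sup {exp(−D_KL(P‖P₀)) : E_P[Z] = 0} = inf_λ E_{P₀}[e^{λZ}]`. -/
theorem svalue_mean_eq_inf_mgf (P₀ : Measure ℝ) [IsProbabilityMeasure P₀]
    (hmgf : ∀ l : ℝ, Integrable (fun z => Real.exp (l * z)) P₀) :
    (⨆ P : {P : Measure ℝ //
        IsProbabilityMeasure P ∧ Integrable (fun z => z) P ∧ ∫ z, z ∂P = 0},
      expNegKL P.1 P₀)
      = ⨅ l : ℝ, ∫ z, Real.exp (l * z) ∂P₀ := by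
  have hd2 : Integrable (fun z => z) (Measure.dirac (0:ℝ)) := by
    refine Integrable.congr (integrable_const (0:ℝ)) ?_
    rw [MeasureTheory.ae_dirac_eq]
    exact eventually_pure.2 rfl
  have hd3 : ∫ z, z ∂(Measure.dirac (0:ℝ)) = 0 := by
    simpa using integral_dirac (fun z : ℝ => z) 0
  have elem : {P : Measure ℝ //
      IsProbabilityMeasure P ∧ Integrable (fun z => z) P ∧ ∫ z, z ∂P = 0} :=
    ⟨Measure.dirac 0, inferInstance, hd2, hd3⟩
  haveI hnonempty : Nonempty {P : Measure ℝ //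
      IsProbabilityMeasure P ∧ Integrable (fun z => z) P ∧ ∫ z, z ∂P = 0} := ⟨elem⟩
  have hub : ∀ P : {P : Measure ℝ //
      IsProbabilityMeasure P ∧ Integrable (fun z => z) P ∧ ∫ z, z ∂P = 0},
      ∀ l : ℝ, expNegKL P.1 P₀ ≤ ∫ z, Real.exp (l * z) ∂P₀ := by
    rintro ⟨P, h1, h2, h3⟩ l
    haveI := h1
    exact expNegKL_le P₀ P hmgf h2 h3 l
  have hBddB : BddBelow (Set.range fun l : ℝ => ∫ z, Real.exp (l * z) ∂P₀) := by
    refine ⟨0, ?_⟩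
    rintro x ⟨l, rfl⟩
    exact integral_nonneg fun z => (Real.exp_pos _).le
  have hBddA : BddAbove (Set.range fun P : {P : Measure ℝ //
      IsProbabilityMeasure P ∧ Integrable (fun z => z) P ∧ ∫ z, z ∂P = 0} =>
      expNegKL P.1 P₀) := by
    refine ⟨1, ?_⟩
    rintro x ⟨P, rfl⟩
    exact expNegKL_le_one _ _
  refine le_antisymm (ciSup_le fun P => le_ciInf fun l => hub P l) ?_
  have sign_case : ∀ c : ℝ, c ≠ 0 → (∀ᵐ z ∂P₀, 0 ≤ c * z) →
      (⨅ l : ℝ, ∫ z, Real.exp (l * z) ∂P₀) ≤ ⨆ P : {P : Measure ℝ //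
        IsProbabilityMeasure P ∧ Integrable (fun z => z) P ∧ ∫ z, z ∂P = 0},
        expNegKL P.1 P₀ := by
    intro c hc hsgn
    have htend := tendsto_mgf_atom P₀ c hc hsgn
    have hIle : (⨅ l : ℝ, ∫ z, Real.exp (l * z) ∂P₀) ≤ (P₀ {(0:ℝ)}).toReal :=
      ge_of_tendsto' htend fun n => ciInf_le hBddB _
    rcases eq_or_ne (P₀ {(0:ℝ)}) 0 with hp | hp
    · have h0 : (P₀ {(0:ℝ)}).toReal = 0 := by rw [hp]; simp
      rw [h0] at hIle
      calc (⨅ l : ℝ, ∫ z, Real.exp (l * z) ∂P₀) ≤ (0:ℝ) := hIle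
        _ ≤ expNegKL elem.1 P₀ := expNegKL_nonneg _ _
        _ ≤ _ := le_ciSup hBddA elem
    · obtain ⟨P, h1, h2, h3, h4⟩ := cond_measure P₀ hp
      calc (⨅ l : ℝ, ∫ z, Real.exp (l * z) ∂P₀) ≤ (P₀ {(0:ℝ)}).toReal := hIle
        _ = expNegKL P P₀ := h4.symm
        _ ≤ _ := le_ciSup hBddA ⟨P, h1, h2, h3⟩
  by_cases hA : P₀ {z : ℝ | 0 < z} = 0
  · refine sign_case (-1) (by norm_num) ?_
    rw [ae_iff]
    have h : {z : ℝ | ¬ 0 ≤ (-1:ℝ) * z} = {z : ℝ | 0 < z} := by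
      ext z
      simp [not_le]
    rw [h, hA]
  · by_cases hB : P₀ {z : ℝ | z < 0} = 0
    · refine sign_case 1 one_ne_zero ?_
      rw [ae_iff]
      have h : {z : ℝ | ¬ 0 ≤ (1:ℝ) * z} = {z : ℝ | z < 0} := by
        ext z
        simp [not_le]
      rw [h, hB]
    · obtain ⟨t, ht⟩ := exists_min P₀ hmgf hA hB
      obtain ⟨P, h1, h2, h3, h4⟩ := case_min P₀ hmgf t ht
      calc (⨅ l : ℝ, ∫ z, Real.exp (l * z) ∂P₀)
          ≤ ∫ z, Real.exp (t * z) ∂P₀ := ciInf_le hBddB t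
        _ = expNegKL P P₀ := h4.symm
        _ ≤ _ := le_ciSup hBddA ⟨P, h1, h2, h3⟩
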